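/- If Y = r₂E₂ + r₃E₃ + F₁(x₁) lies in the Peirce subspace J₂(K) ⊂ J₃(K) (no E₁, F₂, F₃ components), then Y^{×2} = (r₂r₃ − N(x₁))·E₁, and the characteristic polynomial factors as Φ_{r₁E₁+Y}(λ) = (λ − r₁)(λ² − (r₂+r₃)λ + r₂r₃ − N(x₁)). -/

import Mathlib

open Matrix

/-- `K` is a composition algebra over `F` (with conjugation `star` and norm
`N x = x * star x`): traces and norms are scalars, and the norm is multiplicative. -/
class IsCompAlg (F K : Type*) [Field F] [NonAssocRing K] [Module F K] [StarRing K] : Prop where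
  central_trace : ∀ x : K, ∃ c : F, x + star x = c • (1 : K)
  central_norm : ∀ x : K, ∃ c : F, x * star x = c • (1 : K)
  star_mul_self_comm : ∀ x : K, star x * x = x * star x
  norm_comp : ∀ x y : K, (x * y) * star (x * y) = (x * star x) * (y * star y)

variable (F : Type*) {K : Type*} [Field F] [CharZero F]
  [NonAssocRing K] [Module F K] [SMulCommClass F K K] [IsScalarTower F K K]
  [StarRing K]

/-- The bilinear form `(x|y) = ½ (x ȳ + conj (x ȳ))` on the composition algebra `K`. -/
noncomputable def bK (x y : K) : K := (2:F)⁻¹ • (x * star y + star (x * star y))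

/-- The Jordan product `X ∘ Y = ½ (XY + YX)` on 3×3 matrices over `K`. -/
noncomputable def jord (X Y : Matrix (Fin 3) (Fin 3) K) : Matrix (Fin 3) (Fin 3) K :=
  (2:F)⁻¹ • (X * Y + Y * X)

/-- The trace bilinear form `(X|Y) = tr (X ∘ Y)`. -/
noncomputable def jform (X Y : Matrix (Fin 3) (Fin 3) K) : K := (jord F X Y).trace

/-- The Freudenthal cross product
`X × Y = X∘Y − ½ (tr(X) Y + tr(Y) X − (tr(X)tr(Y) − (X|Y)) E)`. -/
noncomputable def cross (X Y : Matrix (Fin 3) (Fin 3) K) : Matrix (Fin 3) (Fin 3) K :=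
  jord F X Y - (2:F)⁻¹ • (X.trace • Y + Y.trace • X
    - (X.trace * Y.trace - jform F X Y) • (1 : Matrix (Fin 3) (Fin 3) K))

/-- The Freudenthal determinant `det X = ⅓ (X × X | X)`. -/
noncomputable def Det (X : Matrix (Fin 3) (Fin 3) K) : K :=
  (3:F)⁻¹ • jform F (cross F X X) X

/-- The diagonal basis element `E_i`. -/
def Ei (K : Type*) [NonAssocRing K] (i : Fin 3) : Matrix (Fin 3) (Fin 3) K :=
  Matrix.single i i 1

/-- The off-diagonal hermitian basis element `F_i(x)`, with `x` in position
`(i+1, i+2)` and `star x` in position `(i+2, i+1)` (indices mod 3). -/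
def Fi (i : Fin 3) (x : K) : Matrix (Fin 3) (Fin 3) K :=
  Matrix.single (i+1) (i+2) x + Matrix.single (i+2) (i+1) (star x)

set_option linter.unusedSectionVars false in
private def Mk (a b c : F) (u v : K) : Matrix (Fin 3) (Fin 3) K :=
  !![a•1, 0, 0; 0, b•1, u; 0, v, c•1]

set_option linter.unusedSectionVars false in
private lemma cross_Mk (a b c cN : F) (u v : K) (hu : u*v = cN•(1:K)) (hv : v*u = cN•(1:K)) :
    cross F (Mk F a b c u v) (Mk F a b c u v)
      = Mk F (b*c - cN) (a*c) (a*b) (-(a•u)) (-(a•v)) := by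
  unfold cross jform jord Mk
  ext i j
  fin_cases i <;> fin_cases j <;>
    simp [Matrix.mul_apply, Fin.sum_univ_three, Matrix.trace_fin_three, Matrix.one_apply,
      Matrix.vecHead, Matrix.vecTail, smul_mul_assoc, mul_smul_comm, mul_add, add_mul,
      hu, hv] <;>
    match_scalars <;> field_simp <;> ring

set_option linter.unusedSectionVars false in
private lemma Det_Mk (a b c cN : F) (u v : K) (hu : u*v = cN•(1:K)) (hv : v*u = cN•(1:K)) :
    Det F (Mk F a b c u v) = (a*b*c - a*cN) • (1:K) := by
  unfold Det
  rw [cross_Mk F a b c cN u v hu hv]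
  unfold jform jord Mk
  simp [Matrix.mul_apply, Fin.sum_univ_three, Matrix.trace_fin_three,
    Matrix.vecHead, Matrix.vecTail, smul_mul_assoc, mul_smul_comm, hu, hv]
  match_scalars; field_simp; ring

/-- For `Y = r₂E₂ + r₃E₃ + F₁(x₁)` in the Peirce subspace `J₂(K)`:
`Y^{×2} = (r₂r₃ − N(x₁)) E₁` and
`Φ_{r₁E₁+Y}(λ) = (λ−r₁)(λ² − (r₂+r₃)λ + r₂r₃ − N(x₁))`. -/
theorem peirce_crossSq [IsCompAlg F K] (r1 r2 r3 : F) (x1 : K) :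
    cross F (r2 • Ei K 1 + r3 • Ei K 2 + Fi 0 x1) (r2 • Ei K 1 + r3 • Ei K 2 + Fi 0 x1)
      = ((r2 * r3) • (1 : K) - bK F x1 x1) • Ei K 0 ∧
    ∀ l : F, Det F (l • (1 : Matrix (Fin 3) (Fin 3) K)
          - (r1 • Ei K 0 + r2 • Ei K 1 + r3 • Ei K 2 + Fi 0 x1))
      = ((l - r1) * (l ^ 2 - (r2 + r3) * l + r2 * r3)) • (1 : K)
        - (l - r1) • bK F x1 x1 := by
  
  obtain ⟨cN, hc⟩ := IsCompAlg.central_norm (F := F) x1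
  have hv : star x1 * x1 = cN • (1:K) := by rw [IsCompAlg.star_mul_self_comm (F := F), hc]
  have hb : bK F x1 x1 = cN • (1:K) := by
    unfold bK
    rw [StarMul.star_mul, star_star, hc]
    match_scalars; field_simp; ring
  constructor
  · have hY : (r2 • Ei K 1 + r3 • Ei K 2 + Fi 0 x1 : Matrix (Fin 3) (Fin 3) K)
        = Mk F 0 r2 r3 x1 (star x1) := by
      ext i j
      fin_cases i <;> fin_cases j <;>
        simp [Ei, Fi, Mk, Matrix.single, Matrix.vecHead, Matrix.vecTail]
    rw [hY, cross_Mk F 0 r2 r3 cN x1 (star x1) hc hv, hb]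
    ext i j
    fin_cases i <;> fin_cases j <;>
      simp [Ei, Mk, Matrix.single, Matrix.vecHead, Matrix.vecTail, sub_mul,
        smul_mul_assoc] <;>
      match_scalars <;> ring
  · intro l
    have hX : (l • (1 : Matrix (Fin 3) (Fin 3) K)
          - (r1 • Ei K 0 + r2 • Ei K 1 + r3 • Ei K 2 + Fi 0 x1))
        = Mk F (l-r1) (l-r2) (l-r3) (-x1) (-(star x1)) := by
      ext i j
      fin_cases i <;> fin_cases j <;>
        simp [Ei, Fi, Mk, Matrix.single, Matrix.one_apply, Matrix.vecHead,
          Matrix.vecTail, sub_smul] <;>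
        match_scalars <;> ring
    rw [hX, Det_Mk F (l-r1) (l-r2) (l-r3) cN (-x1) (-(star x1))
      (by rw [neg_mul_neg, hc]) (by rw [neg_mul_neg, hv]), hb]
    match_scalars; ring
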